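/- Let n be a natural number with n ≥ 2 and let i be a natural number with 0 ≤ i ≤ n − 2. Then the centipede graph P_n ∘ K_1 satisfies d_0(P_n ∘ K_1, n + i) = Σ_{k=1}^{n−i} C(n, i+k) · C(i+k, i), where C(a, b) denotes the binomial coefficient. -/

import Mathlib

open Finset

/-- `S` is a dominating set of `G`: every vertex not in `S` is adjacent to a vertex of `S`. -/
def IsDominatingSet {V : Type*} (G : SimpleGraph V) (S : Finset V) : Prop :=
  ∀ v : V, v ∉ S → ∃ u ∈ S, G.Adj u v

/-- `S` is an isolate dominating set of `G`: a dominating set whose induced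
subgraph has an isolated vertex. -/
def IsIsolateDominatingSet {V : Type*} (G : SimpleGraph V) (S : Finset V) : Prop :=
  IsDominatingSet G S ∧ ∃ v ∈ S, ∀ u ∈ S, ¬ G.Adj v u

/-- `d(G, i)`: the number of dominating sets of `G` of cardinality `i`. -/
noncomputable def domCount {V : Type*} [Fintype V] (G : SimpleGraph V) (i : ℕ) : ℕ :=
  Set.ncard {S : Finset V | IsDominatingSet G S ∧ S.card = i}

/-- `d₀(G, i)`: the number of isolate dominating sets of `G` of cardinality `i`. -/
noncomputable def isoDomCount {V : Type*} [Fintype V] (G : SimpleGraph V) (i : ℕ) : ℕ :=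
  Set.ncard {S : Finset V | IsIsolateDominatingSet G S ∧ S.card = i}

/-- `γ₀(G)`: the isolate domination number, the minimum cardinality of an
isolate dominating set of `G`. -/
noncomputable def isoDomNumber {V : Type*} [Fintype V] (G : SimpleGraph V) : ℕ :=
  sInf {k : ℕ | ∃ S : Finset V, IsIsolateDominatingSet G S ∧ S.card = k}

/-- The corona `G ∘ K₁`: to each vertex `v` of `G` attach a new pendant vertex `v'`. -/
def coronaK1 {V : Type*} (G : SimpleGraph V) : SimpleGraph (V ⊕ V) where
  Adj v w :=
    match v, w with
    | Sum.inl a, Sum.inl b => G.Adj a b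
    | Sum.inl a, Sum.inr b => a = b
    | Sum.inr a, Sum.inl b => a = b
    | Sum.inr _, Sum.inr _ => False
  symm := by
    constructor
    rintro (a | a) (b | b) h <;> simp_all
    · exact G.adj_symm h
  loopless := by
    constructor
    rintro (a | a) h <;> simp_all

lemma coronaK1_adj_ll {V : Type*} (G : SimpleGraph V) (a b : V) :
    (coronaK1 G).Adj (Sum.inl a) (Sum.inl b) ↔ G.Adj a b := Iff.rfl

lemma coronaK1_adj_lr {V : Type*} (G : SimpleGraph V) (a b : V) :
    (coronaK1 G).Adj (Sum.inl a) (Sum.inr b) ↔ a = b := Iff.rfl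

lemma coronaK1_adj_rl {V : Type*} (G : SimpleGraph V) (a b : V) :
    (coronaK1 G).Adj (Sum.inr a) (Sum.inl b) ↔ a = b := Iff.rfl

lemma coronaK1_adj_rr {V : Type*} (G : SimpleGraph V) (a b : V) :
    (coronaK1 G).Adj (Sum.inr a) (Sum.inr b) ↔ False := Iff.rfl

lemma centipede_char {n : ℕ} (hn : 2 ≤ n) (S : Finset (Fin n ⊕ Fin n)) :
    IsIsolateDominatingSet (coronaK1 (SimpleGraph.pathGraph n)) S ↔
      (∀ j, Sum.inl j ∈ S ∨ Sum.inr j ∈ S) ∧ ∃ j, Sum.inr j ∈ S ∧ Sum.inl j ∉ S := by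
  constructor
  · rintro ⟨hdom, v, hv, hiso⟩
    have hall : ∀ j, Sum.inl j ∈ S ∨ Sum.inr j ∈ S := by
      intro j
      by_cases h : Sum.inr j ∈ S
      · exact Or.inr h
      · obtain ⟨u, hu, hadj⟩ := hdom _ h
        rcases u with a | a
        · rw [coronaK1_adj_lr] at hadj
          subst hadj; exact Or.inl hu
        · rw [coronaK1_adj_rr] at hadj
          exact hadj.elim
    refine ⟨hall, ?_⟩
    rcases v with j | j
    · have hrj : Sum.inr j ∉ S := fun h => hiso _ h ((coronaK1_adj_lr _ _ _).2 rfl)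
      obtain ⟨j', hadj⟩ : ∃ j' : Fin n, (SimpleGraph.pathGraph n).Adj j j' := by
        rcases lt_or_ge ((j : ℕ) + 1) n with h | h
        · exact ⟨⟨(j : ℕ) + 1, h⟩, by rw [SimpleGraph.pathGraph_adj]; left; rfl⟩
        · have h1 : 1 ≤ (j : ℕ) := by have := j.isLt; omega
          exact ⟨⟨(j : ℕ) - 1, by omega⟩, by
            rw [SimpleGraph.pathGraph_adj]; right; simp; omega⟩
      have hlj' : Sum.inl j' ∉ S := fun h => hiso _ h ((coronaK1_adj_ll _ _ _).2 hadj)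
      rcases hall j' with h | h
      · exact absurd h hlj'
      · exact ⟨j', h, hlj'⟩
    · exact ⟨j, hv, fun h => hiso _ h ((coronaK1_adj_rl _ _ _).2 rfl)⟩
  · rintro ⟨hall, j₀, hj₀, hlj₀⟩
    refine ⟨?_, Sum.inr j₀, hj₀, ?_⟩
    · rintro (j | j) hj
      · rcases hall j with h | h
        · exact absurd h hj
        · exact ⟨Sum.inr j, h, (coronaK1_adj_rl _ _ _).2 rfl⟩
      · rcases hall j with h | h
        · exact ⟨Sum.inl j, h, (coronaK1_adj_lr _ _ _).2 rfl⟩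
        · exact absurd h hj
    · rintro (b | b) hb hadj
      · rw [coronaK1_adj_rl] at hadj
        exact hlj₀ (hadj ▸ hb)
      · exact (coronaK1_adj_rr _ _ _).1 hadj

lemma sum_arith {n i : ℕ} (hi : i ≤ n) :
    (∑ k ∈ Finset.Icc 1 (n - i), n.choose (i + k) * (i + k).choose i) + n.choose i
      = ∑ a ∈ Finset.range (n + 1), n.choose a * a.choose i := by
  have h1 : ∑ k ∈ Finset.Icc 1 (n - i), n.choose (i + k) * (i + k).choose i
      = ∑ a ∈ Finset.Icc (i + 1) n, n.choose a * a.choose i := by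
    have hmap : Finset.Icc (i + 1) n = (Finset.Icc 1 (n - i)).map (addLeftEmbedding i) := by
      rw [Finset.map_add_left_Icc]
      congr 1
      omega
    rw [hmap, Finset.sum_map]
    simp [addLeftEmbedding_apply]
  have h2 : (∑ a ∈ Finset.Icc (i + 1) n, n.choose a * a.choose i) + n.choose i
      = ∑ a ∈ Finset.Icc i n, n.choose a * a.choose i := by
    have hIoc : Finset.Icc (i + 1) n = Finset.Ioc i n := by
      ext x; simp [Finset.mem_Icc, Finset.mem_Ioc]
    rw [hIoc, ← Finset.Ioc_insert_left hi, Finset.sum_insert (by simp),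
      Nat.choose_self, mul_one]
    ring
  have h3 : ∑ a ∈ Finset.Icc i n, n.choose a * a.choose i
      = ∑ a ∈ Finset.range (n + 1), n.choose a * a.choose i := by
    refine Finset.sum_subset ?_ ?_
    · intro a ha
      simp only [Finset.mem_Icc] at ha
      simp only [Finset.mem_range]
      omega
    · intro a ha hna
      simp only [Finset.mem_range] at ha
      simp only [Finset.mem_Icc] at hna
      have : a < i := by omega
      rw [Nat.choose_eq_zero_of_lt this, mul_zero]
  rw [h1, h2, h3]

theorem isoDomCount_centipede (n i : ℕ) (hn : 2 ≤ n) (hi : i ≤ n - 2) :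
    isoDomCount (coronaK1 (SimpleGraph.pathGraph n)) (n + i) =
      ∑ k ∈ Finset.Icc 1 (n - i), n.choose (i + k) * (i + k).choose i := by
  classical
  have hi' : i ≤ n := le_trans hi (Nat.sub_le n 2)
  set L : Finset (Finset (Fin n ⊕ Fin n)) :=
    Finset.univ.filter (fun S =>
      IsIsolateDominatingSet (coronaK1 (SimpleGraph.pathGraph n)) S ∧ S.card = n + i) with hL
  have hcount : isoDomCount (coronaK1 (SimpleGraph.pathGraph n)) (n + i) = L.card := by
    rw [isoDomCount, ← Set.ncard_coe_finset]
    congr 1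
    ext S
    simp [hL]
  set T : Finset ((_ : Finset (Fin n)) × Finset (Fin n)) :=
    ((Finset.univ : Finset (Finset (Fin n))).erase Finset.univ).sigma
      (fun A => A.powersetCard i) with hT
  have hLT : L.card = T.card := by
    refine Finset.card_nbij' (fun S => ⟨S.toLeft, S.toLeft ∩ S.toRight⟩)
      (fun p => p.1.disjSum (p.1ᶜ ∪ p.2)) ?_ ?_ ?_ ?_
    · intro S hS
      dsimp only
      rw [Finset.mem_coe, hL, Finset.mem_filter] at hS
      obtain ⟨-, hiso, hcardS⟩ := hS
      rw [centipede_char hn] at hiso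
      obtain ⟨hall, j₀, hj₀, hlj₀⟩ := hiso
      have hU : S.toLeft ∪ S.toRight = Finset.univ := by
        apply Finset.eq_univ_of_forall
        intro j
        simp only [Finset.mem_union, Finset.mem_toLeft, Finset.mem_toRight]
        exact hall j
      have hcards : S.toLeft.card + S.toRight.card = n + i := by
        rw [Finset.card_toLeft_add_card_toRight, hcardS]
      have hinter : (S.toLeft ∩ S.toRight).card = i := by
        have := Finset.card_union_add_card_inter S.toLeft S.toRight
        rw [hU, Finset.card_univ, Fintype.card_fin] at this
        omega
      rw [Finset.mem_coe, hT, Finset.mem_sigma]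
      constructor
      · rw [Finset.mem_erase]
        refine ⟨?_, Finset.mem_univ _⟩
        intro hAu
        have hAu' : S.toLeft = Finset.univ := hAu
        have : j₀ ∈ S.toLeft := hAu' ▸ Finset.mem_univ j₀
        rw [Finset.mem_toLeft] at this
        exact hlj₀ this
      · rw [Finset.mem_powersetCard]
        exact ⟨Finset.inter_subset_left, hinter⟩
    · rintro ⟨A, C⟩ hp
      dsimp only
      rw [Finset.mem_coe, hT, Finset.mem_sigma, Finset.mem_erase, Finset.mem_powersetCard] at hp
      obtain ⟨⟨hAne, -⟩, hCA, hCcard⟩ := hp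
      dsimp only at hAne hCA hCcard
      rw [Finset.mem_coe, hL, Finset.mem_filter]
      refine ⟨Finset.mem_univ _, ?_, ?_⟩
      · rw [centipede_char hn]
        constructor
        · intro j
          by_cases hj : j ∈ A
          · left
            rw [Finset.inl_mem_disjSum]
            exact hj
          · right
            rw [Finset.inr_mem_disjSum, Finset.mem_union]
            left
            rwa [Finset.mem_compl]
        · obtain ⟨j, hj⟩ : ∃ j, j ∉ A := by
            by_contra h
            push_neg at h
            exact hAne (Finset.eq_univ_of_forall h)
          refine ⟨j, ?_, ?_⟩
          · rw [Finset.inr_mem_disjSum, Finset.mem_union]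
            left
            rwa [Finset.mem_compl]
          · rwa [Finset.inl_mem_disjSum]
      · rw [Finset.card_disjSum, Finset.card_union_of_disjoint
          (disjoint_compl_left.mono_right hCA), Finset.card_compl,
          Fintype.card_fin, hCcard]
        have : A.card ≤ n := by
          have := Finset.card_le_univ A
          rwa [Fintype.card_fin] at this
        omega
    · intro S hS
      dsimp only
      rw [Finset.mem_coe, hL, Finset.mem_filter] at hS
      obtain ⟨-, hiso, -⟩ := hS
      rw [centipede_char hn] at hiso
      obtain ⟨hall, -⟩ := hiso
      ext x
      rcases x with j | j
      · simp
      · simp only [Finset.inr_mem_disjSum, Finset.mem_union, Finset.mem_compl,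
          Finset.mem_toLeft, Finset.mem_inter, Finset.mem_toRight]
        rcases hall j with h | h <;> tauto
    · rintro ⟨A, C⟩ hp
      dsimp only
      rw [Finset.mem_coe, hT, Finset.mem_sigma, Finset.mem_erase, Finset.mem_powersetCard] at hp
      obtain ⟨-, hCA, -⟩ := hp
      dsimp only at hCA
      have h1 : (A.disjSum (Aᶜ ∪ C)).toLeft = A := Finset.toLeft_disjSum
      have h2 : (A.disjSum (Aᶜ ∪ C)).toLeft ∩ (A.disjSum (Aᶜ ∪ C)).toRight = C := by
        rw [Finset.toLeft_disjSum, Finset.toRight_disjSum]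
        ext j
        simp only [Finset.mem_inter, Finset.mem_union, Finset.mem_compl]
        constructor
        · rintro ⟨hjA, hj | hj⟩
          · exact absurd hjA hj
          · exact hj
        · intro hj
          exact ⟨hCA hj, Or.inr hj⟩
      exact Sigma.ext h1 (heq_of_eq h2)
  have hTcard : T.card = ∑ A ∈ (Finset.univ : Finset (Finset (Fin n))).erase Finset.univ,
      A.card.choose i := by
    rw [hT, Finset.card_sigma]
    exact Finset.sum_congr rfl fun A _ => Finset.card_powersetCard i A
  have hallsum : ∑ A ∈ (Finset.univ : Finset (Finset (Fin n))), A.card.choose i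
      = ∑ a ∈ Finset.range (n + 1), n.choose a * a.choose i := by
    rw [← Finset.powerset_univ, Finset.sum_powerset]
    rw [Finset.card_univ, Fintype.card_fin]
    refine Finset.sum_congr rfl fun a ha => ?_
    rw [Finset.sum_congr rfl (fun A hA => by
      rw [(Finset.mem_powersetCard.1 hA).2]), Finset.sum_const,
      Finset.card_powersetCard, Finset.card_univ, Fintype.card_fin, smul_eq_mul]
  have herase : (∑ A ∈ (Finset.univ : Finset (Finset (Fin n))).erase Finset.univ,
        A.card.choose i) + n.choose i
      = ∑ A ∈ (Finset.univ : Finset (Finset (Fin n))), A.card.choose i := by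
    have := Finset.sum_erase_add (Finset.univ : Finset (Finset (Fin n)))
      (fun A => A.card.choose i) (Finset.mem_univ (Finset.univ : Finset (Fin n)))
    simp only [Finset.card_univ, Fintype.card_fin] at this
    exact this
  have hfinal := sum_arith hi' (n := n) (i := i)
  omega
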